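/- Let k, l ∈ ℕ and let K be a compact subset of (0,2). Then there exist constants C > 0 and Y ≥ 1 such that for all α ∈ K and all y with |y| ≥ Y, |𝓘_α^{(k,l)}(y) − ψ_α^{(l)}(y) ∫_ℝ D^{(k)}(φ)(z) dz| ≤ C ψ_α^{(l)}(y)/√|y|. In particular (since ∫_ℝ φ(z) dz = 1), there exists C > 0 such that for all α ∈ K and all |y| > 1, |𝓘_α^{(0,l)}(y) − ψ_α^{(l)}(y)| ≤ C ψ_α^{(l)}(y)/√|y|. -/

import Mathlib

open MeasureTheory Filter Set Topology Matrix

noncomputable section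

namespace LevyLAN

/-- Standard Gaussian density `φ`. -/
def gauss (y : ℝ) : ℝ := (Real.sqrt (2 * Real.pi))⁻¹ * Real.exp (-(y ^ 2) / 2)

/-- Symmetric `α`-stable density `φ_α`, defined by Fourier inversion. -/
def stableDensity (α z : ℝ) : ℝ :=
  (2 * Real.pi)⁻¹ * ∫ u : ℝ, Real.cos (z * u) * Real.exp (-(|u| ^ α))

/-- `∂_α φ_α`. -/
def stableDensityDalpha (α z : ℝ) : ℝ :=
  -(2 * Real.pi)⁻¹ * ∫ u : ℝ, Real.cos (z * u) * |u| ^ α * Real.log |u| * Real.exp (-(|u| ^ α))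

/-- The operator `(D f) y = (y * f y)' = f y + y * f' y`. -/
def Dop (f : ℝ → ℝ) (y : ℝ) : ℝ := f y + y * deriv f y

/-- `f_α(y, w)`. -/
def fFun (α y w : ℝ) : ℝ := ∫ z : ℝ, gauss (y - w * z) * stableDensity α z

/-- `g_α(y, w)`. -/
def gFun (α y w : ℝ) : ℝ := ∫ z : ℝ, Dop gauss (y - w * z) * stableDensity α z

/-- `h_α(y, w)`. -/
def hFun (α y w : ℝ) : ℝ := ∫ z : ℝ, gauss (y - w * z) * Dop (stableDensity α) z

/-- `k_α(y, w)`. -/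
def kFun (α y w : ℝ) : ℝ := ∫ z : ℝ, gauss (y - w * z) * stableDensityDalpha α z

/-- `c_α`. -/
def cAlpha (α : ℝ) : ℝ :=
  if α = 1 then 1 / Real.pi
  else -(α * (α - 1)) / (2 * Real.Gamma (2 - α) * Real.cos (Real.pi * α / 2))

/-- `w_n(θ) = n^{1/2 - 1/α} δ / σ`. -/
def wn (n : ℕ) (σ δ α : ℝ) : ℝ := (n : ℝ) ^ ((1 : ℝ) / 2 - 1 / α) * δ / σ

/-- `l_α(y, w)` (it depends on `n`). -/
def lFun (n : ℕ) (α y w : ℝ) : ℝ :=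
  ((Real.log n - Real.log (Real.log n)) / (2 * α) - Real.log n / α ^ 2) * hFun α y w
    + kFun α y w

def kappa0 (σ δ α : ℝ) : ℝ := 2 * cAlpha α / (α * (2 - α) ^ (α / 2)) * (δ / σ) ^ α

def kappa1 (σ δ α : ℝ) : ℝ :=
  Real.log (δ / σ) + deriv cAlpha α / cAlpha α - Real.log (2 - α) / 2 - 1 / α

/-- The density `p_{1/n}(y, θ)`, with parameter `θ = (σ, δ, α) : Fin 3 → ℝ`. -/
def pdens (n : ℕ) (θ : Fin 3 → ℝ) (y : ℝ) : ℝ :=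
  Real.sqrt n / θ 0 * fFun (θ 2) (Real.sqrt n * y / θ 0) (wn n (θ 0) (θ 1) (θ 2))

/-- The log-likelihood `ln L_n(θ)`. -/
def logLik (n : ℕ) (θ : Fin 3 → ℝ) (x : Fin n → ℝ) : ℝ :=
  ∑ i, Real.log (pdens n θ (x i))

/-- Partial derivative in the `j`-th parameter coordinate. -/
def pderiv (j : Fin 3) (F : (Fin 3 → ℝ) → ℝ) (θ : Fin 3 → ℝ) : ℝ :=
  deriv (fun t => F (Function.update θ j t)) (θ j)

/-- The score `G_n(θ) = ∇_θ ln L_n(θ)`. -/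
def scoreVec (n : ℕ) (θ : Fin 3 → ℝ) (x : Fin n → ℝ) : Fin 3 → ℝ :=
  fun j => pderiv j (fun θ' => logLik n θ' x) θ

/-- The Hessian matrix `J_n(θ)` of the log-likelihood. -/
def hessMat (n : ℕ) (θ : Fin 3 → ℝ) (x : Fin n → ℝ) : Matrix (Fin 3) (Fin 3) ℝ :=
  Matrix.of fun i j => pderiv i (fun θ' => pderiv j (fun θ'' => logLik n θ'' x) θ') θ

def rate (n : ℕ) (α : ℝ) : ℝ := Real.log n ^ (α / 4) / (n : ℝ) ^ (α / 4)

/-- The rate matrix `u_n(θ)`. -/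
def un (n : ℕ) (θ : Fin 3 → ℝ) : Matrix (Fin 3) (Fin 3) ℝ :=
  !![1 / Real.sqrt n, 0, 0;
     0, rate n (θ 2), -(rate n (θ 2) * (θ 1 / (2 * θ 2)) * (Real.log n - Real.log (Real.log n)));
     0, 0, rate n (θ 2)]

/-- The information matrix `I(θ)`. -/
def Imat (θ : Fin 3 → ℝ) : Matrix (Fin 3) (Fin 3) ℝ :=
  !![2 / θ 0 ^ 2, 0, 0;
     0, θ 2 ^ 2 / θ 1 ^ 2 * kappa0 (θ 0) (θ 1) (θ 2),
        θ 2 / θ 1 * kappa0 (θ 0) (θ 1) (θ 2) * kappa1 (θ 0) (θ 1) (θ 2);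
     0, θ 2 / θ 1 * kappa0 (θ 0) (θ 1) (θ 2) * kappa1 (θ 0) (θ 1) (θ 2),
        kappa0 (θ 0) (θ 1) (θ 2) * (kappa1 (θ 0) (θ 1) (θ 2) ^ 2 + 1 / θ 2 ^ 2)]

/-- `ℙ_n`, the `n`-fold product of the law with Lebesgue density `p_{1/n}(·, θ)`. -/
def Pn (n : ℕ) (θ : Fin 3 → ℝ) : Measure (Fin n → ℝ) :=
  Measure.pi fun _ => MeasureTheory.volume.withDensity fun y => ENNReal.ofReal (pdens n θ y)

/-- The standard Gaussian measure on `ℝ³`. -/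
def stdGauss3 : Measure (Fin 3 → ℝ) :=
  Measure.pi fun _ => ProbabilityTheory.gaussianReal 0 1

/-- Euclidean (Frobenius) norm of a real 3×3 matrix. -/
def frobNorm (M : Matrix (Fin 3) (Fin 3) ℝ) : ℝ := Real.sqrt (∑ i, ∑ j, M i j ^ 2)

/-- Euclidean norm of a vector of `ℝ³`. -/
def vecNorm (v : Fin 3 → ℝ) : ℝ := Real.sqrt (∑ j, v j ^ 2)

/-- The admissible families of functions `ψ_α^{(p)}`. -/
structure IsPsiFamily (ψ : ℝ → ℕ → ℝ → ℝ) : Prop where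
  contDiff : ∀ α ∈ Set.Ioo (0 : ℝ) 2, ∀ p : ℕ, ContDiff ℝ 2 (ψ α p)
  pos : ∀ α ∈ Set.Ioo (0 : ℝ) 2, ∀ p : ℕ, ∀ y : ℝ, 0 < ψ α p y
  even : ∀ α ∈ Set.Ioo (0 : ℝ) 2, ∀ p : ℕ, ∀ y : ℝ, ψ α p (-y) = ψ α p y
  eq_one : ∀ α ∈ Set.Ioo (0 : ℝ) 2, ∀ p : ℕ, ∀ y : ℝ, |y| ≤ 1 → ψ α p y = 1
  eq_tail : ∀ α ∈ Set.Ioo (0 : ℝ) 2, ∀ p : ℕ, ∀ y : ℝ, 3 ≤ |y| →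
    ψ α p y = Real.log |y| ^ p / |y| ^ (α + 1)
  unifBound : ∀ K : Set ℝ, K ⊆ Set.Ioo (0 : ℝ) 2 → IsCompact K → ∀ p : ℕ,
    ∃ c > (0 : ℝ), ∃ C : ℝ, ∀ α ∈ K, ∀ y : ℝ, 1 ≤ |y| → |y| ≤ 3 →
      c ≤ ψ α p y ∧ ψ α p y ≤ C

/-- `𝓘_α^{(k,l)}`. -/
def Ical (ψ : ℝ → ℕ → ℝ → ℝ) (α : ℝ) (k l : ℕ) (y : ℝ) : ℝ :=
  ∫ z in {z : ℝ | 1 < |z|}, Dop^[k] gauss (y - z) * ψ α l z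

/-- `f_α^{(k,l,m)}`. -/
def fklm (α : ℝ) (k l m : ℕ) (y w : ℝ) : ℝ :=
  ∫ z : ℝ, Dop^[k] gauss (y - w * z)
    * Dop^[l] (fun z' => iteratedDeriv m (fun a => stableDensity a z') α) z

def Gamman (n : ℕ) (α : ℝ) : ℝ := Real.sqrt ((1 - α / 2) * Real.log n)

def Mn (n : ℕ) (α : ℝ) : ℝ := Real.sqrt ((2 - α) * Real.log n)

def Kconst (σ δ α : ℝ) : ℝ := deriv cAlpha α + cAlpha α * Real.log (δ / σ)
lemma hasDerivAt_gauss (y : ℝ) : HasDerivAt gauss (-y * gauss y) y := by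
  have h1 : HasDerivAt (fun y : ℝ => -(y ^ 2) / 2) (-y) y := by
    have := ((hasDerivAt_pow 2 y).neg).div_const 2
    refine this.congr_deriv ?_
    norm_num; ring
  have h2 := (h1.exp).const_mul ((Real.sqrt (2 * Real.pi))⁻¹)
  refine h2.congr_deriv ?_
  simp [gauss]; ring

lemma hasDerivAt_poly_gauss (p : Polynomial ℝ) (y : ℝ) :
    HasDerivAt (fun y => p.eval y * gauss y)
      ((p.derivative.eval y - y * p.eval y) * gauss y) y := by
  have := (p.hasDerivAt y).mul (hasDerivAt_gauss y)
  refine this.congr_deriv ?_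
  ring

def gaussPoly : ℕ → Polynomial ℝ
  | 0 => 1
  | k + 1 =>
      gaussPoly k + Polynomial.X * (gaussPoly k).derivative
        - Polynomial.X ^ 2 * gaussPoly k

lemma Dk_eq (k : ℕ) : ∀ y, Dop^[k] gauss y = (gaussPoly k).eval y * gauss y := by
  induction k with
  | zero => intro y; simp [gaussPoly]
  | succ k ih =>
    intro y
    rw [Function.iterate_succ_apply']
    have hfun : Dop^[k] gauss = fun y => (gaussPoly k).eval y * gauss y := funext ih
    rw [hfun]
    show (gaussPoly k).eval y * gauss y + y * deriv (fun y => (gaussPoly k).eval y * gauss y) y = _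
    rw [(hasDerivAt_poly_gauss (gaussPoly k) y).deriv]
    simp only [gaussPoly, Polynomial.eval_add, Polynomial.eval_sub, Polynomial.eval_mul,
      Polynomial.eval_pow, Polynomial.eval_X]
    ring

lemma gaussPoly_even (k : ℕ) : ∀ y : ℝ, (gaussPoly k).eval (-y) = (gaussPoly k).eval y := by
  induction k with
  | zero => intro y; simp [gaussPoly]
  | succ k ih =>
    have hder : ∀ y : ℝ, (gaussPoly k).derivative.eval (-y) = -(gaussPoly k).derivative.eval y := by
      intro y
      have h1 : (fun x : ℝ => (gaussPoly k).eval (-x)) = fun x : ℝ => (gaussPoly k).eval x :=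
        funext fun x => ih x
      have h2 : deriv (fun x : ℝ => (gaussPoly k).eval (-x)) y
          = -(gaussPoly k).derivative.eval (-y) := by
        have h3 := ((gaussPoly k).hasDerivAt (-y)).comp y (hasDerivAt_neg y)
        simpa [Function.comp_def] using h3.deriv
      rw [h1, Polynomial.deriv] at h2
      linarith
    intro y
    simp only [gaussPoly, Polynomial.eval_add, Polynomial.eval_sub, Polynomial.eval_mul,
      Polynomial.eval_pow, Polynomial.eval_X, ih y, hder y]
    ring

lemma gauss_even (y : ℝ) : gauss (-y) = gauss y := by simp [gauss, neg_sq]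

lemma Dk_even (k : ℕ) (y : ℝ) : Dop^[k] gauss (-y) = Dop^[k] gauss y := by
  rw [Dk_eq, Dk_eq, gaussPoly_even, gauss_even]

lemma Dk_continuous (k : ℕ) : Continuous (Dop^[k] gauss) := by
  rw [funext (Dk_eq k)]
  exact ((gaussPoly k).continuous_aeval).mul (by unfold gauss; continuity)

lemma abs_pow_le (y : ℝ) (i : ℕ) : |y| ^ i ≤ Real.exp ((i : ℝ) ^ 2) * Real.exp (y ^ 2 / 4) := by
  have h1 : |y| ^ i ≤ Real.exp ((i : ℝ) * |y|) := by
    calc |y| ^ i ≤ Real.exp |y| ^ i :=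
          pow_le_pow_left₀ (abs_nonneg y) (by linarith [Real.add_one_le_exp |y|]) i
      _ = Real.exp ((i : ℝ) * |y|) := (Real.exp_nat_mul |y| i).symm
  calc |y| ^ i ≤ Real.exp ((i : ℝ) * |y|) := h1
    _ ≤ Real.exp ((i : ℝ) ^ 2 + y ^ 2 / 4) := by
        apply Real.exp_le_exp.2
        nlinarith [sq_nonneg ((i : ℝ) - |y| / 2), sq_abs y]
    _ = _ := Real.exp_add _ _

lemma poly_eval_bound (p : Polynomial ℝ) :
    ∃ B > 0, ∀ y : ℝ, |p.eval y| ≤ B * Real.exp (y ^ 2 / 4) := by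
  refine ⟨(∑ i ∈ Finset.range (p.natDegree + 1), |p.coeff i| * Real.exp ((i : ℝ) ^ 2)) + 1,
    by positivity, fun y => ?_⟩
  rw [Polynomial.eval_eq_sum_range]
  calc |∑ i ∈ Finset.range (p.natDegree + 1), p.coeff i * y ^ i|
      ≤ ∑ i ∈ Finset.range (p.natDegree + 1), |p.coeff i * y ^ i| :=
        Finset.abs_sum_le_sum_abs _ _
    _ ≤ ∑ i ∈ Finset.range (p.natDegree + 1),
          (|p.coeff i| * Real.exp ((i : ℝ) ^ 2)) * Real.exp (y ^ 2 / 4) := by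
        apply Finset.sum_le_sum
        intro i _
        rw [abs_mul, abs_pow]
        calc |p.coeff i| * |y| ^ i
            ≤ |p.coeff i| * (Real.exp ((i : ℝ) ^ 2) * Real.exp (y ^ 2 / 4)) :=
              mul_le_mul_of_nonneg_left (abs_pow_le y i) (abs_nonneg _)
          _ = _ := by ring
    _ = (∑ i ∈ Finset.range (p.natDegree + 1), |p.coeff i| * Real.exp ((i : ℝ) ^ 2))
          * Real.exp (y ^ 2 / 4) := by rw [← Finset.sum_mul]
    _ ≤ _ := by
        have : (0:ℝ) < Real.exp (y ^ 2 / 4) := Real.exp_pos _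
        nlinarith [this]

lemma Dk_bound (k : ℕ) : ∃ B > 0, ∀ y : ℝ, |Dop^[k] gauss y| ≤ B * Real.exp (-(y ^ 2) / 4) := by
  obtain ⟨B, hB, h⟩ := poly_eval_bound (gaussPoly k)
  refine ⟨B, hB, fun y => ?_⟩
  rw [Dk_eq, abs_mul]
  have hg0 : 0 ≤ gauss y := by unfold gauss; positivity
  have hg : gauss y ≤ Real.exp (-(y ^ 2) / 2) := by
    unfold gauss
    have h1 : (1:ℝ) ≤ Real.sqrt (2 * Real.pi) := by
      rw [show (1:ℝ) = Real.sqrt 1 by simp]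
      exact Real.sqrt_le_sqrt (by nlinarith [Real.pi_gt_three])
    have h2 : (Real.sqrt (2 * Real.pi))⁻¹ ≤ 1 := inv_le_one_of_one_le₀ h1
    nlinarith [Real.exp_pos (-(y^2)/2)]
  rw [abs_of_nonneg hg0]
  calc |( gaussPoly k).eval y| * gauss y
      ≤ (B * Real.exp (y ^ 2 / 4)) * Real.exp (-(y ^ 2) / 2) := by
        apply mul_le_mul (h y) hg hg0 (by positivity)
    _ = B * Real.exp (-(y ^ 2) / 4) := by
        rw [mul_assoc, ← Real.exp_add]; ring_nf

lemma int_exp {c : ℝ} (hc : 0 < c) : Integrable (fun u : ℝ => Real.exp (-(u ^ 2) / c)) := by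
  have h := integrable_exp_neg_mul_sq (show (0:ℝ) < 1 / c by positivity)
  have heq : (fun u : ℝ => Real.exp (-(u ^ 2) / c)) = fun u : ℝ => Real.exp (-(1 / c) * u ^ 2) := by
    funext u; ring_nf
  rw [heq]; exact h

lemma abs_mul_exp_le (u : ℝ) : |u| * Real.exp (-(u ^ 2) / 4) ≤ Real.exp 2 * Real.exp (-(u ^ 2) / 8) := by
  have h1 : |u| ≤ Real.exp (2 + u ^ 2 / 8) := by
    calc |u| ≤ Real.exp |u| := by linarith [Real.add_one_le_exp |u|]
      _ ≤ Real.exp (2 + u ^ 2 / 8) := by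
          apply Real.exp_le_exp.2
          nlinarith [sq_nonneg (|u| / 2 - 2), sq_abs u]
  calc |u| * Real.exp (-(u ^ 2) / 4) ≤ Real.exp (2 + u ^ 2 / 8) * Real.exp (-(u ^ 2) / 4) := by
        apply mul_le_mul_of_nonneg_right h1 (Real.exp_pos _).le
    _ = Real.exp 2 * Real.exp (-(u ^ 2) / 8) := by rw [← Real.exp_add, ← Real.exp_add]; ring_nf

/-- Generic bound for set integrals. -/
lemma abs_setIntegral_le {s : Set ℝ} (hs : MeasurableSet s) {G H : ℝ → ℝ}
    (hGm : AEStronglyMeasurable G (volume.restrict s))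
    (hH : Integrable H) (hH0 : ∀ z, 0 ≤ H z) (hbound : ∀ z ∈ s, |G z| ≤ H z) :
    |∫ z in s, G z| ≤ ∫ z, H z := by
  have hGint : IntegrableOn G s := by
    refine Integrable.mono' hH.integrableOn hGm ?_
    filter_upwards [ae_restrict_mem hs] with z hz
    simpa using hbound z hz
  calc |∫ z in s, G z| ≤ ∫ z in s, |G z| := by
        simpa [Real.norm_eq_abs] using norm_integral_le_integral_norm (μ := volume.restrict s) G
    _ ≤ ∫ z in s, H z :=
        setIntegral_mono_on hGint.abs hH.integrableOn hs (fun z hz => hbound z hz)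
    _ ≤ ∫ z, H z := setIntegral_le_integral hH (ae_of_all _ hH0)

lemma pow_four_le (y : ℝ) (hy : 0 ≤ y) : y ^ 4 ≤ 32 ^ 4 * Real.exp (y / 8) := by
  have h1 : y ≤ 32 * Real.exp (y / 32) := by
    have := Real.add_one_le_exp (y / 32)
    nlinarith [Real.exp_pos (y / 32)]
  calc y ^ 4 ≤ (32 * Real.exp (y / 32)) ^ 4 := pow_le_pow_left₀ hy h1 4
    _ = 32 ^ 4 * Real.exp (y / 32) ^ 4 := by ring
    _ = 32 ^ 4 * Real.exp (y / 8) := by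
        rw [← Real.exp_nat_mul]
        ring_nf

lemma exp_neg_y8_le (y : ℝ) (hy : 1 ≤ y) :
    Real.exp (-(y / 8)) ≤ 32 ^ 4 / (Real.sqrt y * y ^ 3) := by
  have hy0 : (0:ℝ) < y := by linarith
  have hs : Real.sqrt y * y ^ 3 ≤ y ^ 4 := by
    have h1 : Real.sqrt y ≤ y := Real.sqrt_le_iff.2 ⟨by linarith, by nlinarith⟩
    have h3 : (0:ℝ) < y ^ 3 := by positivity
    nlinarith
  have hss : (0:ℝ) < Real.sqrt y * y ^ 3 := by positivity
  rw [le_div_iff₀ hss]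
  have hkey : y ^ 4 * Real.exp (-(y / 8)) ≤ 32 ^ 4 := by
    have h2 := pow_four_le y hy0.le
    have h3 : Real.exp (y / 8) * Real.exp (-(y / 8)) = 1 := by
      rw [← Real.exp_add]; simp
    nlinarith [Real.exp_pos (-(y / 8))]
  calc Real.exp (-(y / 8)) * (Real.sqrt y * y ^ 3)
      ≤ Real.exp (-(y / 8)) * y ^ 4 := by
        apply mul_le_mul_of_nonneg_left hs (Real.exp_pos _).le
    _ ≤ 32 ^ 4 := by linarith [hkey]

lemma one_le_log {t : ℝ} (ht : 3 ≤ t) : 1 ≤ Real.log t := by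
  rw [Real.le_log_iff_exp_le (by linarith)]
  calc Real.exp 1 ≤ 2.7182818286 := Real.exp_one_lt_d9.le
    _ ≤ t := by norm_num; linarith

lemma log_pow_div_rpow_le (l : ℕ) (α t : ℝ) (hα : 0 < α) (ht : 3 ≤ t) :
    Real.log t ^ l / t ^ (α + 1) ≤ ((l : ℝ) + 1) ^ l := by
  have ht0 : (0:ℝ) < t := by linarith
  have ht1 : (1:ℝ) ≤ t := by linarith
  set ε : ℝ := 1 / ((l : ℝ) + 1) with hε
  have hε0 : (0:ℝ) < ε := by positivity
  have hlog : Real.log t ≤ ((l : ℝ) + 1) * t ^ ε := by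
    have h2 : Real.log (t ^ ε) = ε * Real.log t := Real.log_rpow ht0 ε
    have h1 : ε * Real.log t ≤ t ^ ε := by
      rw [← h2]
      have := Real.log_le_sub_one_of_pos (Real.rpow_pos_of_pos ht0 ε)
      linarith
    calc Real.log t = (1 / ε) * (ε * Real.log t) := by field_simp
      _ ≤ (1 / ε) * t ^ ε := mul_le_mul_of_nonneg_left h1 (by positivity)
      _ = ((l : ℝ) + 1) * t ^ ε := by rw [hε]; field_simp
  have hlogpow : Real.log t ^ l ≤ ((l : ℝ) + 1) ^ l * t ^ (ε * (l : ℝ)) := by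
    have h0 : 0 ≤ Real.log t := Real.log_nonneg ht1
    calc Real.log t ^ l ≤ (((l : ℝ) + 1) * t ^ ε) ^ l := pow_le_pow_left₀ h0 hlog l
      _ = ((l : ℝ) + 1) ^ l * (t ^ ε) ^ l := mul_pow _ _ l
      _ = ((l : ℝ) + 1) ^ l * t ^ (ε * (l : ℝ)) := by
          rw [← Real.rpow_natCast (t ^ ε) l, ← Real.rpow_mul ht0.le]
  have hexp : t ^ (ε * (l : ℝ)) ≤ t ^ (α + 1) := by
    apply Real.rpow_le_rpow_of_exponent_le ht1
    have hl : (0:ℝ) ≤ (l : ℝ) := Nat.cast_nonneg l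
    have : ε * (l : ℝ) ≤ 1 := by
      rw [hε, div_mul_eq_mul_div, one_mul, div_le_one (by positivity)]
      linarith
    linarith
  rw [div_le_iff₀ (Real.rpow_pos_of_pos ht0 _)]
  calc Real.log t ^ l ≤ ((l : ℝ) + 1) ^ l * t ^ (ε * (l : ℝ)) := hlogpow
    _ ≤ ((l : ℝ) + 1) ^ l * t ^ (α + 1) := mul_le_mul_of_nonneg_left hexp (by positivity)

lemma psi_upper {ψ : ℝ → ℕ → ℝ → ℝ} (hψ : IsPsiFamily ψ) (K : Set ℝ) (hK : IsCompact K)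
    (hKsub : K ⊆ Set.Ioo (0 : ℝ) 2) (l : ℕ) :
    ∃ Cψ : ℝ, 1 ≤ Cψ ∧ ∀ α ∈ K, ∀ y : ℝ, ψ α l y ≤ Cψ := by
  obtain ⟨c, hc, C, hC⟩ := hψ.unifBound K hKsub hK l
  refine ⟨max (max 1 C) (((l : ℝ) + 1) ^ l), le_trans (le_max_left 1 C) (le_max_left _ _),
    fun α hα y => ?_⟩
  have hα2 := hKsub hα
  rcases le_or_gt |y| 1 with h1 | h1
  · rw [hψ.eq_one α hα2 l y h1]
    exact le_trans (le_max_left 1 C) (le_max_left _ _)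
  rcases le_or_gt |y| 3 with h3 | h3
  · exact le_trans (hC α hα y h1.le h3).2 (le_trans (le_max_right 1 C) (le_max_left _ _))
  · rw [hψ.eq_tail α hα2 l y h3.le]
    exact le_trans (log_pow_div_rpow_le l α |y| hα2.1 h3.le) (le_max_right _ _)

lemma psi_tail_lower {ψ : ℝ → ℕ → ℝ → ℝ} (hψ : IsPsiFamily ψ) (l : ℕ) {α : ℝ}
    (hα : α ∈ Set.Ioo (0:ℝ) 2) {y : ℝ} (hy : 3 ≤ |y|) :
    1 / |y| ^ 3 ≤ ψ α l y := by
  set t := |y| with htdef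
  have ht1 : (1:ℝ) ≤ t := by linarith
  have ht0 : (0:ℝ) < t := by linarith
  rw [hψ.eq_tail α hα l y hy]
  have h1 : (1:ℝ) ≤ Real.log t ^ l := by
    calc (1:ℝ) = 1 ^ l := (one_pow l).symm
      _ ≤ Real.log t ^ l := pow_le_pow_left₀ zero_le_one (one_le_log hy) l
  have h2 : t ^ (α + 1) ≤ t ^ ((3:ℕ) : ℝ) :=
    Real.rpow_le_rpow_of_exponent_le ht1 (by push_cast; linarith [hα.2])
  rw [Real.rpow_natCast] at h2
  exact div_le_div₀ (by positivity) h1 (Real.rpow_pos_of_pos ht0 _) h2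

set_option maxHeartbeats 1000000 in
lemma psi_window {ψ : ℝ → ℕ → ℝ → ℝ} (hψ : IsPsiFamily ψ) (l : ℕ) {α : ℝ}
    (hα : α ∈ Set.Ioo (0:ℝ) 2) {y : ℝ} (hy : 100 ≤ y) {z : ℝ} (hz : |z - y| ≤ Real.sqrt y) :
    |ψ α l z - ψ α l y| ≤ ((((l:ℝ) + 3) * 16 * 2 ^ l) * (ψ α l y / y)) * |z - y| := by
  have hy0 : (0:ℝ) < y := by linarith
  have hy1 : (1:ℝ) ≤ y := by linarith
  have hsq : Real.sqrt y < y / 2 := (Real.sqrt_lt' (by linarith)).2 (by nlinarith)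
  have hzb := abs_le.1 hz
  set s : Set ℝ := Set.Ioo (y / 2) (2 * y) with hs
  have hso : IsOpen s := isOpen_Ioo
  have hys : y ∈ s := ⟨by linarith, by linarith⟩
  have hzs : z ∈ s := by
    have hsnn : 0 ≤ Real.sqrt y := Real.sqrt_nonneg y
    exact ⟨by linarith [hzb.1], by linarith [hzb.2]⟩
  have hmem3 : ∀ t ∈ s, (3:ℝ) < t := by
    intro t ht
    have := ht.1
    linarith
  set g : ℝ → ℝ := fun t => Real.log t ^ l / t ^ (α + 1) with hg
  have heq : Set.EqOn (ψ α l) g s := by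
    intro t ht
    have ht0 : (0:ℝ) < t := lt_trans (by norm_num) (hmem3 t ht)
    have h3 : (3:ℝ) ≤ |t| := by rw [abs_of_pos ht0]; linarith [hmem3 t ht]
    rw [hψ.eq_tail α hα l t h3]
    simp only [hg, abs_of_pos ht0]
  -- value of ψ at y
  have hpsiy : ψ α l y = Real.log y ^ l / y ^ (α + 1) := by
    have := hψ.eq_tail α hα l y (by rw [abs_of_pos hy0]; linarith)
    rwa [abs_of_pos hy0] at this
  set L : ℝ := (((l:ℝ) + 3) * 16 * 2 ^ l) * (ψ α l y / y) with hL
  have hbound : ∀ t ∈ s, ‖deriv (ψ α l) t‖ ≤ L := by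
    intro t ht
    obtain ⟨htl, htr⟩ : y / 2 < t ∧ t < 2 * y := by simpa [hs, Set.mem_Ioo] using ht
    have ht3 := hmem3 t ht
    have ht0 : (0:ℝ) < t := by linarith
    have hlo1 : 1 ≤ Real.log t := one_le_log (by linarith)
    have hev : ψ α l =ᶠ[nhds t] g := Filter.eventuallyEq_of_mem (hso.mem_nhds ht) heq
    rw [Real.norm_eq_abs, hev.deriv_eq]
    have h1 : HasDerivAt (fun u : ℝ => Real.log u ^ l)
        ((l:ℝ) * Real.log t ^ (l - 1) * t⁻¹) t :=
      (Real.hasDerivAt_log ht0.ne').pow l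
    have h2 : HasDerivAt (fun u : ℝ => u ^ (α + 1)) ((α + 1) * t ^ α) t := by
      have h := Real.hasDerivAt_rpow_const (x := t) (p := α + 1) (Or.inl ht0.ne')
      convert h using 2
      norm_num
    have hden : t ^ (α + 1) ≠ 0 := (Real.rpow_pos_of_pos ht0 _).ne'
    have hg' : HasDerivAt g
        (((l:ℝ) * Real.log t ^ (l - 1) * t⁻¹ * t ^ (α + 1)
          - Real.log t ^ l * ((α + 1) * t ^ α)) / (t ^ (α + 1)) ^ 2) t := h1.div h2 hden
    rw [hg'.deriv]
    set lo := Real.log t with hlodef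
    set A : ℝ := t ^ α with hA
    have hApos : (0:ℝ) < A := Real.rpow_pos_of_pos ht0 α
    have hta : t ^ (α + 1) = A * t := Real.rpow_add_one ht0.ne' α
    rw [hta]
    have hnum : (l:ℝ) * lo ^ (l - 1) * t⁻¹ * (A * t) - lo ^ l * ((α + 1) * A)
        = A * ((l:ℝ) * lo ^ (l - 1) - (α + 1) * lo ^ l) := by
      field_simp
    rw [hnum]
    have hABpos : (0:ℝ) < (A * t) ^ 2 := by positivity
    rw [abs_div, abs_mul, abs_of_pos hApos, abs_of_pos hABpos]
    have hX : |(l:ℝ) * lo ^ (l - 1) - (α + 1) * lo ^ l| ≤ ((l:ℝ) + 3) * lo ^ l := by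
      have hlo0 : (0:ℝ) ≤ lo := by linarith
      have h1' : lo ^ (l - 1) ≤ lo ^ l := pow_le_pow_right₀ hlo1 (Nat.sub_le l 1)
      have hl0 : (0:ℝ) ≤ (l:ℝ) := Nat.cast_nonneg l
      have hp1 : (0:ℝ) ≤ lo ^ l := by positivity
      have hp2 : (0:ℝ) ≤ lo ^ (l - 1) := by positivity
      have hα1 := hα.1
      have hα2 := hα.2
      rw [abs_le]
      constructor <;> nlinarith [mul_le_mul_of_nonneg_left h1' hl0]
    -- |g' t| ≤ (l+3) lo^l / (A t^2) ≤ L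
    have hstep1 : A * |(l:ℝ) * lo ^ (l - 1) - (α + 1) * lo ^ l| / (A * t) ^ 2
        ≤ ((l:ℝ) + 3) * (lo ^ l / (A * t ^ 2)) := by
      have : A * |(l:ℝ) * lo ^ (l - 1) - (α + 1) * lo ^ l| / (A * t) ^ 2
          ≤ A * (((l:ℝ) + 3) * lo ^ l) / (A * t) ^ 2 := by gcongr
      calc A * |(l:ℝ) * lo ^ (l - 1) - (α + 1) * lo ^ l| / (A * t) ^ 2
          ≤ A * (((l:ℝ) + 3) * lo ^ l) / (A * t) ^ 2 := this
        _ = ((l:ℝ) + 3) * (lo ^ l / (A * t ^ 2)) := by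
            field_simp
    refine le_trans hstep1 ?_
    -- final comparison with L
    set ly := Real.log y with hly
    set Ay : ℝ := y ^ α with hAy
    have hAypos : (0:ℝ) < Ay := Real.rpow_pos_of_pos hy0 α
    have hly1 : (1:ℝ) ≤ ly := one_le_log (by linarith)
    have htya : y ^ (α + 1) = Ay * y := Real.rpow_add_one hy0.ne' α
    have hLval : L = (((l:ℝ) + 3) * 16 * 2 ^ l) * (ly ^ l / (Ay * y * y)) := by
      rw [hL, hpsiy, htya]
      field_simp
    rw [hLval]
    have hlo2 : lo ≤ 2 * ly := by
      have hlt : t ≤ 2 * y := htr.le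
      have hmono : Real.log t ≤ Real.log (2 * y) := Real.log_le_log ht0 hlt
      have hlog2y : Real.log (2 * y) = Real.log 2 + Real.log y :=
        Real.log_mul (by norm_num) hy0.ne'
      have hlog2 : Real.log 2 ≤ 1 := by
        calc Real.log 2 ≤ 0.6931471808 := Real.log_two_lt_d9.le
          _ ≤ 1 := by norm_num
      rw [hlog2y] at hmono
      simp only [hlodef, hly] at *
      linarith
    have e1 : lo ^ l ≤ 2 ^ l * ly ^ l := by
      calc lo ^ l ≤ (2 * ly) ^ l := pow_le_pow_left₀ (by linarith) hlo2 l
        _ = 2 ^ l * ly ^ l := mul_pow 2 ly l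
    have e2 : Ay ≤ 4 * A := by
      have hba : (y / 2 : ℝ) ^ (α : ℝ) ≤ A :=
        Real.rpow_le_rpow (by positivity) htl.le (le_of_lt hα.1)
      have hsplit : Ay = (y / 2 : ℝ) ^ (α : ℝ) * (2 : ℝ) ^ (α : ℝ) := by
        rw [hAy, ← Real.mul_rpow (by positivity) (by norm_num)]
        norm_num
      have h2α : (2 : ℝ) ^ (α : ℝ) ≤ 4 := by
        calc (2 : ℝ) ^ (α : ℝ) ≤ (2 : ℝ) ^ (2 : ℝ) :=
              Real.rpow_le_rpow_of_exponent_le one_le_two (le_of_lt hα.2)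
          _ = 4 := by
              rw [show (2:ℝ) = ((2:ℕ):ℝ) by norm_num]
              rw [Real.rpow_natCast]
              norm_num
      have hba0 : (0:ℝ) ≤ (y / 2 : ℝ) ^ (α : ℝ) := by positivity
      calc Ay = (y / 2 : ℝ) ^ (α : ℝ) * (2 : ℝ) ^ (α : ℝ) := hsplit
        _ ≤ A * 4 := mul_le_mul hba h2α (by positivity) hApos.le
        _ = 4 * A := by ring
    have e3 : y ^ 2 ≤ 4 * t ^ 2 := by nlinarith [htl]
    have hX2 : lo ^ l / (A * t ^ 2) ≤ 16 * 2 ^ l * ly ^ l / (Ay * y * y) := by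
      rw [div_le_div_iff₀ (by positivity) (by positivity)]
      have hly0 : (0:ℝ) ≤ ly ^ l := by positivity
      calc lo ^ l * (Ay * y * y)
          ≤ (2 ^ l * ly ^ l) * (Ay * y * y) :=
            mul_le_mul_of_nonneg_right e1 (by positivity)
        _ = (2 ^ l * ly ^ l) * (Ay * y ^ 2) := by ring
        _ ≤ (2 ^ l * ly ^ l) * ((4 * A) * (4 * t ^ 2)) := by
            apply mul_le_mul_of_nonneg_left _ (by positivity)
            exact mul_le_mul e2 e3 (by positivity) (by positivity)
        _ = 16 * 2 ^ l * ly ^ l * (A * t ^ 2) := by ring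
    calc ((l:ℝ) + 3) * (lo ^ l / (A * t ^ 2))
        ≤ ((l:ℝ) + 3) * (16 * 2 ^ l * ly ^ l / (Ay * y * y)) :=
          mul_le_mul_of_nonneg_left hX2 (by positivity)
      _ = (((l:ℝ) + 3) * 16 * 2 ^ l) * (ly ^ l / (Ay * y * y)) := by ring
  have hdiff : ∀ x ∈ s, DifferentiableAt ℝ (ψ α l) x := fun x _ =>
    ((hψ.contDiff α hα l).differentiable (by norm_num)).differentiableAt
  have hmvt := Convex.norm_image_sub_le_of_norm_deriv_le hdiff hbound (convex_Ioo _ _) hys hzs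
  simpa [Real.norm_eq_abs] using hmvt

lemma measurableSet_E : MeasurableSet {z : ℝ | 1 < |z|} :=
  (isOpen_lt continuous_const continuous_abs).measurableSet

lemma integral_gauss_eq_one : ∫ z : ℝ, gauss z = 1 := by
  unfold gauss
  rw [MeasureTheory.integral_const_mul]
  have h1 : ∫ z : ℝ, Real.exp (-(z ^ 2) / 2) = Real.sqrt (2 * Real.pi) := by
    have h := integral_gaussian (1 / 2 : ℝ)
    have heq : (fun z : ℝ => Real.exp (-(z ^ 2) / 2))
        = fun z : ℝ => Real.exp (-(1 / 2 : ℝ) * z ^ 2) := by funext z; ring_nf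
    rw [heq, h, show Real.pi / (1 / 2) = 2 * Real.pi by ring]
  rw [h1]
  rw [inv_mul_cancel₀ (ne_of_gt (Real.sqrt_pos.2 (by positivity)))]

lemma Ical_neg {ψ : ℝ → ℕ → ℝ → ℝ} (hψ : IsPsiFamily ψ) {α : ℝ}
    (hα : α ∈ Set.Ioo (0:ℝ) 2) (k l : ℕ) (y : ℝ) :
    Ical ψ α k l (-y) = Ical ψ α k l y := by
  unfold Ical
  rw [← integral_indicator measurableSet_E, ← integral_indicator measurableSet_E]
  have h := integral_neg_eq_self
    (Set.indicator {z : ℝ | 1 < |z|} (fun z => Dop^[k] gauss (-y - z) * ψ α l z)) volume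
  rw [← h]
  congr 1
  funext z
  rw [Set.indicator_apply, Set.indicator_apply]
  have hmem : (-z ∈ {z : ℝ | 1 < |z|}) ↔ (z ∈ {z : ℝ | 1 < |z|}) := by
    simp [Set.mem_setOf_eq, abs_neg]
  by_cases hzE : z ∈ {z : ℝ | 1 < |z|}
  · rw [if_pos (hmem.2 hzE), if_pos hzE]
    have h2 : -y - -z = -(y - z) := by ring
    rw [h2, Dk_even, hψ.even α hα l]
  · rw [if_neg (fun hm => hzE (hmem.1 hm)), if_neg hzE]

set_option maxHeartbeats 2000000 in
lemma main_pos (k l : ℕ) (K : Set ℝ) (hK : IsCompact K) (hKsub : K ⊆ Set.Ioo (0 : ℝ) 2)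
    (ψ : ℝ → ℕ → ℝ → ℝ) (hψ : IsPsiFamily ψ) :
    ∃ C > (0 : ℝ), ∀ α ∈ K, ∀ y : ℝ, 100 ≤ y →
      |Ical ψ α k l y - ψ α l y * ∫ z : ℝ, Dop^[k] gauss z| ≤ C * ψ α l y / Real.sqrt y := by
  obtain ⟨B, hB, hBb⟩ := Dk_bound k
  obtain ⟨Cψ, hCψ1, hCψ⟩ := psi_upper hψ K hK hKsub l
  set I8 : ℝ := ∫ z : ℝ, Real.exp (-(z ^ 2) / 8) with hI8
  have hI8nn : 0 ≤ I8 := integral_nonneg (fun z => (Real.exp_pos _).le)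
  set c1 : ℝ := ((l : ℝ) + 3) * 16 * 2 ^ l with hc1
  have hc1pos : (0:ℝ) < c1 := by positivity
  set A1 : ℝ := c1 * (B * Real.exp 2 * I8) with hA1
  set A2 : ℝ := 2 * Cψ * B * I8 * 32 ^ 4 with hA2
  set A3 : ℝ := B * I8 * 32 ^ 4 with hA3
  have hA1nn : 0 ≤ A1 := by positivity
  have hA2nn : 0 ≤ A2 := by positivity
  have hA3nn : 0 ≤ A3 := by positivity
  refine ⟨A1 + A2 + A3 + 1, by positivity, ?_⟩
  intro α hα y hy
  have hα2 := hKsub hα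
  have hy0 : (0:ℝ) < y := by linarith
  have hy1 : (1:ℝ) ≤ y := by linarith
  have hsqpos : (0:ℝ) < Real.sqrt y := Real.sqrt_pos.2 hy0
  have hsqle : Real.sqrt y ≤ y := Real.sqrt_le_iff.2 ⟨by linarith, by nlinarith⟩
  set E : Set ℝ := {z : ℝ | 1 < |z|} with hE
  have hEm : MeasurableSet E := measurableSet_E
  set S : Set ℝ := {z : ℝ | |z - y| ≤ Real.sqrt y} with hS
  have hSm : MeasurableSet S :=
    (isClosed_le ((continuous_id.sub continuous_const).abs) continuous_const).measurableSet
  set P : ℝ → ℝ := ψ α l with hP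
  have hPcont : Continuous P := (hψ.contDiff α hα2 l).continuous
  have hPpos : ∀ t, 0 < P t := hψ.pos α hα2 l
  have hPle : ∀ t, P t ≤ Cψ := fun t => hCψ α hα t
  set Kf : ℝ → ℝ := fun z => Dop^[k] gauss (y - z) with hKf
  have hKfcont : Continuous Kf := (Dk_continuous k).comp (continuous_const.sub continuous_id)
  have hKfb : ∀ z, |Kf z| ≤ B * Real.exp (-((y - z) ^ 2) / 4) := fun z => hBb (y - z)
  have hint8 : Integrable (fun z : ℝ => Real.exp (-((y - z) ^ 2) / 8)) :=
    (int_exp (by norm_num : (0:ℝ) < 8)).comp_sub_left y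
  have hint4 : Integrable (fun z : ℝ => Real.exp (-((y - z) ^ 2) / 4)) :=
    (int_exp (by norm_num : (0:ℝ) < 4)).comp_sub_left y
  have htrans8 : ∫ z : ℝ, Real.exp (-((y - z) ^ 2) / 8) = I8 :=
    integral_sub_left_eq_self (fun u : ℝ => Real.exp (-(u ^ 2) / 8)) volume y
  have hKfint : Integrable Kf := by
    apply Integrable.mono' (hint4.const_mul B) hKfcont.aestronglyMeasurable
    exact ae_of_all _ (fun z => by simpa [Real.norm_eq_abs] using hKfb z)
  set G : ℝ → ℝ := fun z => (P z - P y) * Kf z with hG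
  have hGcont : Continuous G := (hPcont.sub continuous_const).mul hKfcont
  have hPdiff : ∀ z, |P z - P y| ≤ 2 * Cψ := by
    intro z
    have h1 := hPpos z; have h2 := hPpos y; have h3 := hPle z; have h4 := hPle y
    rw [abs_le]; constructor <;> linarith
  have hGint : Integrable G := by
    apply Integrable.mono' (hint4.const_mul (2 * Cψ * B)) hGcont.aestronglyMeasurable
    refine ae_of_all _ (fun z => ?_)
    calc ‖G z‖ = |P z - P y| * |Kf z| := by rw [Real.norm_eq_abs, hG, abs_mul]
      _ ≤ (2 * Cψ) * (B * Real.exp (-((y - z) ^ 2) / 4)) :=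
          mul_le_mul (hPdiff z) (hKfb z) (abs_nonneg _) (by positivity)
      _ = 2 * Cψ * B * Real.exp (-((y - z) ^ 2) / 4) := by ring
  have htrans : ∫ z : ℝ, Kf z = ∫ z : ℝ, Dop^[k] gauss z :=
    integral_sub_left_eq_self (Dop^[k] gauss) volume y
  have hsplitE : (∫ z in E, Kf z) + (∫ z in Eᶜ, Kf z) = ∫ z : ℝ, Kf z :=
    integral_add_compl hEm hKfint
  have hIcal : Ical ψ α k l y = (∫ z in E, G z) + P y * ∫ z in E, Kf z := by
    have heq : ∀ z, Kf z * P z = G z + P y * Kf z := fun z => by rw [hG]; ring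
    calc Ical ψ α k l y = ∫ z in E, Kf z * P z := rfl
      _ = ∫ z in E, (G z + P y * Kf z) := by
          rw [show (fun z => Kf z * P z) = fun z => G z + P y * Kf z from funext heq]
      _ = (∫ z in E, G z) + P y * ∫ z in E, Kf z := by
          rw [integral_add hGint.integrableOn ((hKfint.const_mul (P y)).integrableOn),
            MeasureTheory.integral_const_mul]
  have hdiff : Ical ψ α k l y - P y * ∫ z : ℝ, Dop^[k] gauss z
      = (∫ z in E ∩ S, G z) + (∫ z in E \ S, G z) - P y * ∫ z in Eᶜ, Kf z := by
    rw [hIcal, ← htrans, ← hsplitE, ← integral_inter_add_diff hSm hGint.integrableOn]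
    ring
  rw [hdiff]
  -- pointwise exponential comparisons
  have hexp_split : ∀ z : ℝ, y ≤ (y - z) ^ 2 →
      Real.exp (-((y - z) ^ 2) / 4) ≤ Real.exp (-(y / 8)) * Real.exp (-((y - z) ^ 2) / 8) := by
    intro z hz
    rw [← Real.exp_add]
    apply Real.exp_le_exp.2
    linarith
  -- Term 1
  have hT1 : |∫ z in E ∩ S, G z| ≤ A1 * (P y / Real.sqrt y) := by
    have hPynn : (0:ℝ) ≤ P y := (hPpos y).le
    have hq : (0:ℝ) ≤ c1 * (P y / y) := mul_nonneg hc1pos.le (div_nonneg hPynn hy0.le)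
    have hHint : Integrable
        (fun z : ℝ => (c1 * (P y / y) * (B * Real.exp 2)) * Real.exp (-((y - z) ^ 2) / 8)) :=
      hint8.const_mul _
    have hb : ∀ z ∈ E ∩ S, |G z| ≤
        (c1 * (P y / y) * (B * Real.exp 2)) * Real.exp (-((y - z) ^ 2) / 8) := by
      intro z hzES
      have hzS : |z - y| ≤ Real.sqrt y := hzES.2
      have hwin := psi_window hψ l hα2 hy hzS
      have hKz := hKfb z
      have h1 : |G z| = |P z - P y| * |Kf z| := by rw [hG, abs_mul]
      rw [h1]
      calc |P z - P y| * |Kf z|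
          ≤ (c1 * (P y / y) * |z - y|) * (B * Real.exp (-((y - z) ^ 2) / 4)) := by
            apply mul_le_mul _ hKz (abs_nonneg _) (mul_nonneg hq (abs_nonneg _))
            calc |P z - P y| ≤ (c1 * (P y / y)) * |z - y| := hwin
              _ = c1 * (P y / y) * |z - y| := by ring
        _ = (c1 * (P y / y) * B) * (|y - z| * Real.exp (-((y - z) ^ 2) / 4)) := by
            rw [abs_sub_comm]; ring
        _ ≤ (c1 * (P y / y) * B) * (Real.exp 2 * Real.exp (-((y - z) ^ 2) / 8)) := by
            apply mul_le_mul_of_nonneg_left (abs_mul_exp_le (y - z)) (mul_nonneg hq hB.le)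
        _ = (c1 * (P y / y) * (B * Real.exp 2)) * Real.exp (-((y - z) ^ 2) / 8) := by ring
    have h2 := abs_setIntegral_le (hEm.inter hSm) hGcont.aestronglyMeasurable.restrict
      hHint (fun z => mul_nonneg (mul_nonneg hq (by positivity)) (Real.exp_pos _).le) hb
    have h3 : ∫ z : ℝ, (c1 * (P y / y) * (B * Real.exp 2)) * Real.exp (-((y - z) ^ 2) / 8)
        = c1 * (P y / y) * (B * Real.exp 2) * I8 := by
      rw [MeasureTheory.integral_const_mul, htrans8]
    rw [h3] at h2
    refine le_trans h2 ?_
    have h4 : P y / y ≤ P y / Real.sqrt y := by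
      apply div_le_div_of_nonneg_left (hPpos y).le hsqpos hsqle
    calc c1 * (P y / y) * (B * Real.exp 2) * I8
        ≤ c1 * (P y / Real.sqrt y) * (B * Real.exp 2) * I8 := by
          apply mul_le_mul_of_nonneg_right _ hI8nn
          apply mul_le_mul_of_nonneg_right _ (by positivity)
          exact mul_le_mul_of_nonneg_left h4 hc1pos.le
      _ = A1 * (P y / Real.sqrt y) := by rw [hA1]; ring
  -- Term 2
  have hT2 : |∫ z in E \ S, G z| ≤ 2 * Cψ * B * I8 * Real.exp (-(y / 8)) := by
    have hHint : Integrable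
        (fun z : ℝ => (2 * Cψ * B * Real.exp (-(y / 8))) * Real.exp (-((y - z) ^ 2) / 8)) :=
      hint8.const_mul _
    have hb : ∀ z ∈ E \ S, |G z| ≤
        (2 * Cψ * B * Real.exp (-(y / 8))) * Real.exp (-((y - z) ^ 2) / 8) := by
      intro z hzES
      have hzS : Real.sqrt y < |z - y| := by
        have := hzES.2
        simp only [hS, Set.mem_setOf_eq, not_le] at this
        exact this
      have hyz2 : y ≤ (y - z) ^ 2 := by
        have h0 := Real.sq_sqrt hy0.le
        have h1 : (Real.sqrt y) ^ 2 ≤ |z - y| ^ 2 :=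
          pow_le_pow_left₀ (Real.sqrt_nonneg y) hzS.le 2
        have h2 : |z - y| ^ 2 = (y - z) ^ 2 := by
          rw [sq_abs]; ring
        linarith
      calc |G z| = |P z - P y| * |Kf z| := by rw [hG, abs_mul]
        _ ≤ (2 * Cψ) * (B * Real.exp (-((y - z) ^ 2) / 4)) :=
            mul_le_mul (hPdiff z) (hKfb z) (abs_nonneg _) (by positivity)
        _ ≤ (2 * Cψ) * (B * (Real.exp (-(y / 8)) * Real.exp (-((y - z) ^ 2) / 8))) := by
            apply mul_le_mul_of_nonneg_left _ (by positivity)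
            exact mul_le_mul_of_nonneg_left (hexp_split z hyz2) hB.le
        _ = (2 * Cψ * B * Real.exp (-(y / 8))) * Real.exp (-((y - z) ^ 2) / 8) := by ring
    have h2 := abs_setIntegral_le (hEm.diff hSm) hGcont.aestronglyMeasurable.restrict
      hHint (fun z => by positivity) hb
    have h3 : ∫ z : ℝ, (2 * Cψ * B * Real.exp (-(y / 8))) * Real.exp (-((y - z) ^ 2) / 8)
        = 2 * Cψ * B * Real.exp (-(y / 8)) * I8 := by
      rw [MeasureTheory.integral_const_mul, htrans8]
    rw [h3] at h2
    refine le_trans h2 ?_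
    calc 2 * Cψ * B * Real.exp (-(y / 8)) * I8
        = 2 * Cψ * B * I8 * Real.exp (-(y / 8)) := by ring
      _ ≤ _ := le_refl _
  -- Term 3
  have hT3 : |∫ z in Eᶜ, Kf z| ≤ B * I8 * Real.exp (-(y / 8)) := by
    have hHint : Integrable
        (fun z : ℝ => (B * Real.exp (-(y / 8))) * Real.exp (-((y - z) ^ 2) / 8)) :=
      hint8.const_mul _
    have hb : ∀ z ∈ Eᶜ, |Kf z| ≤
        (B * Real.exp (-(y / 8))) * Real.exp (-((y - z) ^ 2) / 8) := by
      intro z hzc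
      have hz1 : |z| ≤ 1 := by
        have := hzc
        simp only [hE, Set.mem_compl_iff, Set.mem_setOf_eq, not_lt] at this
        exact this
      have hyz2 : y ≤ (y - z) ^ 2 := by
        have h1 : Real.sqrt y ≤ y - 1 := by
          apply Real.sqrt_le_iff.2
          constructor
          · linarith
          · nlinarith
        have h2 : y - 1 ≤ y - z := by
          have := abs_le.1 hz1
          linarith [this.2]
        have h3 := Real.sq_sqrt hy0.le
        nlinarith [Real.sqrt_nonneg y]
      calc |Kf z| ≤ B * Real.exp (-((y - z) ^ 2) / 4) := hKfb z
        _ ≤ B * (Real.exp (-(y / 8)) * Real.exp (-((y - z) ^ 2) / 8)) :=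
            mul_le_mul_of_nonneg_left (hexp_split z hyz2) hB.le
        _ = (B * Real.exp (-(y / 8))) * Real.exp (-((y - z) ^ 2) / 8) := by ring
    have h2 := abs_setIntegral_le hEm.compl hKfcont.aestronglyMeasurable.restrict
      hHint (fun z => by positivity) hb
    have h3 : ∫ z : ℝ, (B * Real.exp (-(y / 8))) * Real.exp (-((y - z) ^ 2) / 8)
        = B * Real.exp (-(y / 8)) * I8 := by
      rw [MeasureTheory.integral_const_mul, htrans8]
    rw [h3] at h2
    refine le_trans h2 ?_
    calc B * Real.exp (-(y / 8)) * I8 = B * I8 * Real.exp (-(y / 8)) := by ring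
      _ ≤ _ := le_refl _
  -- exponential vs psi comparisons
  have habs : |y| = y := abs_of_pos hy0
  have hPy3 : 1 / y ^ 3 ≤ P y := by
    have := psi_tail_lower hψ l hα2 (y := y) (by rw [habs]; linarith)
    rwa [habs] at this
  have hobs : Real.exp (-(y / 8)) ≤ 32 ^ 4 * (P y / Real.sqrt y) := by
    have h1 := exp_neg_y8_le y hy1
    calc Real.exp (-(y / 8)) ≤ 32 ^ 4 / (Real.sqrt y * y ^ 3) := h1
      _ = 32 ^ 4 * ((1 / y ^ 3) / Real.sqrt y) := by
          field_simp
      _ ≤ 32 ^ 4 * (P y / Real.sqrt y) := by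
          gcongr
  have hobs2 : Real.exp (-(y / 8)) ≤ 32 ^ 4 / Real.sqrt y := by
    have h1 := exp_neg_y8_le y hy1
    have hy3 : (1:ℝ) ≤ y ^ 3 := by calc (1:ℝ) = 1 ^ 3 := by norm_num
      _ ≤ y ^ 3 := pow_le_pow_left₀ (by norm_num) hy1 3
    calc Real.exp (-(y / 8)) ≤ 32 ^ 4 / (Real.sqrt y * y ^ 3) := h1
      _ ≤ 32 ^ 4 / Real.sqrt y := by
        apply div_le_div_of_nonneg_left (by positivity) hsqpos
        nlinarith [hsqpos, hy3]
  set R : ℝ := P y / Real.sqrt y with hR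
  have hRpos : (0:ℝ) < R := div_pos (hPpos y) hsqpos
  have hCψ0 : (0:ℝ) ≤ Cψ := by linarith
  set X1 : ℝ := ∫ z in E ∩ S, G z with hX1
  set X2 : ℝ := ∫ z in E \ S, G z with hX2
  set X3 : ℝ := ∫ z in Eᶜ, Kf z with hX3
  have hb2 : |X2| ≤ A2 * R := by
    refine le_trans hT2 ?_
    calc 2 * Cψ * B * I8 * Real.exp (-(y / 8))
        ≤ 2 * Cψ * B * I8 * (32 ^ 4 * R) := by
          apply mul_le_mul_of_nonneg_left hobs (by positivity)
      _ = A2 * R := by rw [hA2]; ring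
  have hb3 : P y * |X3| ≤ A3 * R := by
    have h1 : |X3| ≤ B * I8 * (32 ^ 4 / Real.sqrt y) := by
      refine le_trans hT3 ?_
      apply mul_le_mul_of_nonneg_left hobs2 (by positivity)
    calc P y * |X3| ≤ P y * (B * I8 * (32 ^ 4 / Real.sqrt y)) :=
          mul_le_mul_of_nonneg_left h1 (hPpos y).le
      _ = A3 * R := by rw [hA3, hR]; field_simp
  have htri : |X1 + X2 - P y * X3| ≤ |X1| + |X2| + P y * |X3| := by
    have t1 : |X1 + X2 - P y * X3| ≤ |X1 + X2| + |P y * X3| := by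
      calc |X1 + X2 - P y * X3| = |X1 + X2 + -(P y * X3)| := by ring_nf
        _ ≤ |X1 + X2| + |-(P y * X3)| := abs_add_le _ _
        _ = |X1 + X2| + |P y * X3| := by rw [abs_neg]
    have t2 := abs_add_le X1 X2
    have t3 : |P y * X3| = P y * |X3| := by rw [abs_mul, abs_of_pos (hPpos y)]
    linarith
  calc |X1 + X2 - P y * X3| ≤ |X1| + |X2| + P y * |X3| := htri
    _ ≤ A1 * R + A2 * R + A3 * R := by
        have := hT1
        linarith [hT1, hb2, hb3]
    _ ≤ (A1 + A2 + A3 + 1) * R := by nlinarith [hRpos]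
    _ = (A1 + A2 + A3 + 1) * P y / Real.sqrt y := by rw [hR, mul_div_assoc]



set_option maxHeartbeats 1000000 in
/-- asymptotic expansion of `𝓘_α^{(k,l)}`, uniformly for `α` in a compact
subset of `(0,2)`. -/
theorem statement5 (k l : ℕ) (K : Set ℝ) (hK : IsCompact K) (hKsub : K ⊆ Set.Ioo (0 : ℝ) 2)
    (ψ : ℝ → ℕ → ℝ → ℝ) (hψ : IsPsiFamily ψ) :
    (∃ C > (0 : ℝ), ∃ Y : ℝ, 1 ≤ Y ∧ ∀ α ∈ K, ∀ y : ℝ, Y ≤ |y| →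
      |Ical ψ α k l y - ψ α l y * ∫ z : ℝ, Dop^[k] gauss z| ≤
        C * ψ α l y / Real.sqrt |y|) ∧
    (∃ C > (0 : ℝ), ∀ α ∈ K, ∀ y : ℝ, 1 < |y| →
      |Ical ψ α 0 l y - ψ α l y| ≤ C * ψ α l y / Real.sqrt |y|) := by
  have key : ∀ k' : ℕ, ∃ C > (0 : ℝ), ∀ α ∈ K, ∀ y : ℝ, 100 ≤ |y| →
      |Ical ψ α k' l y - ψ α l y * ∫ z : ℝ, Dop^[k'] gauss z| ≤
        C * ψ α l y / Real.sqrt |y| := by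
    intro k'
    obtain ⟨C1, hC1, hmain⟩ := main_pos k' l K hK hKsub ψ hψ
    refine ⟨C1, hC1, fun α hα y hy => ?_⟩
    have hα2 := hKsub hα
    rcases le_or_gt 0 y with h | h
    · have hyy : |y| = y := abs_of_nonneg h
      rw [hyy] at hy ⊢
      exact hmain α hα y hy
    · have hyy : |y| = -y := abs_of_neg h
      rw [hyy] at hy ⊢
      have heq : Ical ψ α k' l y = Ical ψ α k' l (-y) := by
        have h2 := Ical_neg hψ hα2 k' l (-y)
        rw [neg_neg] at h2
        exact h2
      have hpeq : ψ α l y = ψ α l (-y) := (hψ.even α hα2 l y).symm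
      rw [heq, hpeq]
      exact hmain α hα (-y) hy
  constructor
  · obtain ⟨C1, hC1, hmain⟩ := key k
    exact ⟨C1, hC1, 100, by norm_num, hmain⟩
  · -- second part
    obtain ⟨C0, hC0, hmain0⟩ := key 0
    obtain ⟨c_lb, hc_lb, Cub, hub⟩ := hψ.unifBound K hKsub hK l
    obtain ⟨Cψ, hCψ1, hCψ⟩ := psi_upper hψ K hK hKsub l
    obtain ⟨B, hB, hBb⟩ := Dk_bound 0
    set I4 : ℝ := ∫ z : ℝ, Real.exp (-(z ^ 2) / 4) with hI4
    have hI4nn : 0 ≤ I4 := integral_nonneg (fun z => (Real.exp_pos _).le)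
    set cmin : ℝ := min c_lb (1 / 100 ^ 3) with hcmin_def
    have hcmin : (0:ℝ) < cmin := lt_min hc_lb (by norm_num)
    set X : ℝ := Cψ * B * I4 + Cψ with hX
    have hX0 : (0:ℝ) < X := by
      have : (0:ℝ) < Cψ := by linarith
      positivity
    set C2 : ℝ := C0 + X * 10 / cmin + 1 with hC2
    have hXc : (0:ℝ) ≤ X * 10 / cmin := by positivity
    refine ⟨C2, by positivity, fun α hα y hy1 => ?_⟩
    have hα2 := hKsub hα
    have hPy : 0 < ψ α l y := hψ.pos α hα2 l y
    have hy0' : (0:ℝ) < |y| := by linarith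
    have hsqy : 0 < Real.sqrt |y| := Real.sqrt_pos.2 hy0'
    have hint0 : ∫ z : ℝ, Dop^[0] gauss z = 1 := by
      simp only [Function.iterate_zero, id_eq]
      exact integral_gauss_eq_one
    rcases le_or_gt 100 |y| with hbig | hsmall
    · have h := hmain0 α hα y hbig
      rw [hint0, mul_one] at h
      refine le_trans h ?_
      have hC02 : C0 ≤ C2 := by rw [hC2]; linarith
      exact (div_le_div_iff_of_pos_right hsqy).2 (mul_le_mul_of_nonneg_right hC02 hPy.le)
    · -- crude bound
      have hlb : cmin ≤ ψ α l y := by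
        rcases le_or_gt |y| 3 with h3 | h3
        · exact le_trans (min_le_left _ _) (hub α hα y hy1.le h3).1
        · have h4 := psi_tail_lower hψ l hα2 h3.le
          have h5 : (1:ℝ) / 100 ^ 3 ≤ 1 / |y| ^ 3 := by
            apply div_le_div_of_nonneg_left (by norm_num) (by positivity)
            exact pow_le_pow_left₀ (abs_nonneg y) hsmall.le 3
          exact le_trans (le_trans (min_le_right _ _) h5) h4
      have hIcal_b : |Ical ψ α 0 l y| ≤ Cψ * B * I4 := by
        have hint4 : Integrable (fun z : ℝ => Real.exp (-((y - z) ^ 2) / 4)) :=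
          (int_exp (by norm_num : (0:ℝ) < 4)).comp_sub_left y
        have htrans4 : ∫ z : ℝ, Real.exp (-((y - z) ^ 2) / 4) = I4 :=
          integral_sub_left_eq_self (fun u : ℝ => Real.exp (-(u ^ 2) / 4)) volume y
        have hcont : Continuous (fun z : ℝ => Dop^[0] gauss (y - z) * ψ α l z) :=
          ((Dk_continuous 0).comp (continuous_const.sub continuous_id)).mul
            (hψ.contDiff α hα2 l).continuous
        have hb : ∀ z ∈ {z : ℝ | 1 < |z|}, |Dop^[0] gauss (y - z) * ψ α l z| ≤
            (Cψ * B) * Real.exp (-((y - z) ^ 2) / 4) := by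
          intro z _
          rw [abs_mul]
          have h1 := hBb (y - z)
          have h2 : |ψ α l z| ≤ Cψ := by
            rw [abs_of_pos (hψ.pos α hα2 l z)]; exact hCψ α hα z
          calc |Dop^[0] gauss (y - z)| * |ψ α l z|
              ≤ (B * Real.exp (-((y - z) ^ 2) / 4)) * Cψ :=
                mul_le_mul h1 h2 (abs_nonneg _) (by positivity)
            _ = (Cψ * B) * Real.exp (-((y - z) ^ 2) / 4) := by ring
        have h2 := abs_setIntegral_le measurableSet_E hcont.aestronglyMeasurable.restrict
          (hint4.const_mul (Cψ * B)) (fun z => by positivity) hb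
        rw [MeasureTheory.integral_const_mul, htrans4] at h2
        exact h2
      have htri : |Ical ψ α 0 l y - ψ α l y| ≤ X := by
        have h1 : |Ical ψ α 0 l y - ψ α l y| ≤ |Ical ψ α 0 l y| + |ψ α l y| := by
          calc |Ical ψ α 0 l y - ψ α l y| = |Ical ψ α 0 l y + -(ψ α l y)| := by ring_nf
            _ ≤ |Ical ψ α 0 l y| + |-(ψ α l y)| := abs_add_le _ _
            _ = |Ical ψ α 0 l y| + |ψ α l y| := by rw [abs_neg]
        have h2 : |ψ α l y| ≤ Cψ := by rw [abs_of_pos hPy]; exact hCψ α hα y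
        rw [hX]; linarith
      refine le_trans htri ?_
      have hsq10 : Real.sqrt |y| ≤ 10 := Real.sqrt_le_iff.2 ⟨by norm_num, by nlinarith⟩
      have hrat : cmin / 10 ≤ ψ α l y / Real.sqrt |y| :=
        div_le_div₀ hPy.le hlb hsqy hsq10
      have e1 : X ≤ C2 * (cmin / 10) := by
        have h3 : X * 10 / cmin ≤ C2 := by rw [hC2]; linarith
        calc X = (X * 10 / cmin) * (cmin / 10) := by field_simp
          _ ≤ C2 * (cmin / 10) := mul_le_mul_of_nonneg_right h3 (by positivity)
      calc X ≤ C2 * (cmin / 10) := e1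
        _ ≤ C2 * (ψ α l y / Real.sqrt |y|) := by
            apply mul_le_mul_of_nonneg_left hrat (by positivity)
        _ = C2 * ψ α l y / Real.sqrt |y| := by rw [mul_div_assoc]

end LevyLAN
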